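/- Let E be a set of equations, Φ a set of faults, φ : E → Set Φ, F(M) = ⋃_{e∈M} φ(e), and 𝒯 a family of subsets of E closed under unions of nonempty subfamilies. If M₁ and M₂ are RG sets, then F(M₁) ∪ F(M₂) is a fault signature, and M₁ ∪ M₂ is contained in the unique RG set R with F(R) = F(M₁) ∪ F(M₂). -/
import Mathlib


open Set

/-- The fault signature map: faults appearing in a set of equations. -/
def faultsOf {E Φ : Type*} (φ : E → Set Φ) (M : Set E) : Set Φ := ⋃ e ∈ M, φ e

/-- A fault signature: a nonempty set of faults realized by some testable set. -/
def IsFaultSignature {E Φ : Type*} (φ : E → Set Φ) (𝒯 : Set (Set E)) (F₀ : Set Φ) : Prop :=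
  F₀.Nonempty ∧ ∃ M ∈ 𝒯, faultsOf φ M = F₀

/-- An RG set: a testable set with nonempty fault signature that contains every
testable set with the same fault signature. -/
def IsRGSet {E Φ : Type*} (φ : E → Set Φ) (𝒯 : Set (Set E)) (M : Set E) : Prop :=
  M ∈ 𝒯 ∧ (faultsOf φ M).Nonempty ∧
    ∀ M' ∈ 𝒯, faultsOf φ M' = faultsOf φ M → M' ⊆ M

lemma faultsOf_union {E Φ : Type*} (φ : E → Set Φ) (A B : Set E) :
    faultsOf φ (A ∪ B) = faultsOf φ A ∪ faultsOf φ B := by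
  simp only [faultsOf, biUnion_union]

lemma faultsOf_sUnion {E Φ : Type*} (φ : E → Set Φ) (𝒞 : Set (Set E)) :
    faultsOf φ (⋃₀ 𝒞) = ⋃ M ∈ 𝒞, faultsOf φ M := by
  ext x; simp only [faultsOf, mem_iUnion, mem_sUnion]; aesop

/-- If 𝒯 is closed under unions of nonempty subfamilies and `M₁`, `M₂`
are RG sets, then `F(M₁) ∪ F(M₂)` is a fault signature and `M₁ ∪ M₂` is contained in
the unique RG set `R` with `F(R) = F(M₁) ∪ F(M₂)`. -/
theorem stmt5_union_of_RG_sets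
    {E Φ : Type*} (φ : E → Set Φ) (𝒯 : Set (Set E))
    (hclosed : ∀ 𝒞 ⊆ 𝒯, 𝒞.Nonempty → ⋃₀ 𝒞 ∈ 𝒯)
    (M₁ M₂ : Set E) (h₁ : IsRGSet φ 𝒯 M₁) (h₂ : IsRGSet φ 𝒯 M₂) :
    IsFaultSignature φ 𝒯 (faultsOf φ M₁ ∪ faultsOf φ M₂) ∧
    ∃! R : Set E, IsRGSet φ 𝒯 R ∧
      faultsOf φ R = faultsOf φ M₁ ∪ faultsOf φ M₂ ∧ M₁ ∪ M₂ ⊆ R := by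
  obtain ⟨hT₁, hne₁, hmax₁⟩ := h₁
  obtain ⟨hT₂, hne₂, hmax₂⟩ := h₂
  set F₀ := faultsOf φ M₁ ∪ faultsOf φ M₂ with hF₀
  have hU : M₁ ∪ M₂ ∈ 𝒯 := by
    have := hclosed {M₁, M₂} (by rintro x (rfl|rfl) <;> assumption) ⟨M₁, by simp⟩
    simpa using this
  have hUF : faultsOf φ (M₁ ∪ M₂) = F₀ := faultsOf_union φ M₁ M₂
  have hFne : F₀.Nonempty := hne₁.mono subset_union_left
  set 𝒞 := {M | M ∈ 𝒯 ∧ faultsOf φ M = F₀} with h𝒞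
  have h𝒞sub : 𝒞 ⊆ 𝒯 := fun M hM => hM.1
  have h𝒞ne : 𝒞.Nonempty := ⟨M₁ ∪ M₂, hU, hUF⟩
  set R := ⋃₀ 𝒞 with hR
  have hRT : R ∈ 𝒯 := hclosed 𝒞 h𝒞sub h𝒞ne
  have hRF : faultsOf φ R = F₀ := by
    rw [hR, faultsOf_sUnion]
    apply Subset.antisymm
    · exact iUnion₂_subset fun M hM => hM.2.le
    · exact hUF.ge.trans (subset_biUnion_of_mem (⟨hU, hUF⟩ : (M₁ ∪ M₂) ∈ 𝒞))
  have hRG : IsRGSet φ 𝒯 R := by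
    refine ⟨hRT, hRF ▸ hFne, fun M' hM' hF => ?_⟩
    exact subset_sUnion_of_mem ⟨hM', hF.trans hRF⟩
  refine ⟨⟨hFne, R, hRT, hRF⟩, R, ⟨hRG, hRF, subset_sUnion_of_mem ⟨hU, hUF⟩⟩, ?_⟩
  rintro S ⟨⟨hST, _, hSmax⟩, hSF, -⟩
  exact Subset.antisymm (hRG.2.2 S hST (hSF.trans hRF.symm))
    (hSmax R hRT (hRF.trans hSF.symm))
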